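/- arXiv:0902.3690 — 4 statements merged into one kernel-verified Lean document; each statement's English description precedes it below -/
import Mathlib

section
/- The all-zero-sum negative semidefiniteness of fiber intersection matrices implies: any proper subset S ⊊ {1,...,m} of components of a connected fiber has negative-definite intersection matrix. Precisely, if M is a symmetric m×m rational matrix with nonnegative off-diagonal entries, zero row sums, and connected support graph, then for any nonzero vector a supported on a proper subset of indices, aᵀMa < 0. -/
/-- Any proper subset of components of a connected fiber has negative-definite
intersection matrix: if `M` is symmetric with nonnegative off-diagonal entries,
zero row sums, and connected support graph, then for any nonzero vector `a`
vanishing at at least one index, `aᵀMa < 0`. -/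
theorem proper_subcurve_negative_definite
    {m : ℕ} (hm : 0 < m) (M : Matrix (Fin m) (Fin m) ℚ)
    (hsym : M.IsSymm)
    (hoff : ∀ i j : Fin m, i ≠ j → 0 ≤ M i j)
    (hrow : M.mulVec (fun _ => 1) = 0)
    (hconn : (SimpleGraph.fromRel (fun i j => 0 < M i j)).Connected)
    (a : Fin m → ℚ) (ha : a ≠ 0) (hsupp : ∃ i, a i = 0) :
    dotProduct a (M.mulVec a) < 0 := by
  classical
  have hsym' : ∀ i j : Fin m, M i j = M j i := fun i j => (Matrix.IsSymm.apply hsym j i)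
  have hrow' : ∀ i : Fin m, ∑ j, M i j = 0 := by
    intro i
    have := congrFun hrow i
    simpa [Matrix.mulVec, dotProduct] using this
  set Q : ℚ := ∑ i, ∑ j, M i j * (a i - a j)^2 with hQdef
  -- each term of Q is nonnegative
  have hterm : ∀ i j : Fin m, 0 ≤ M i j * (a i - a j)^2 := by
    intro i j
    rcases eq_or_ne i j with rfl | hij
    · simp
    · exact mul_nonneg (hoff i j hij) (sq_nonneg _)
  have hQnonneg : 0 ≤ Q := by
    apply Finset.sum_nonneg; intro i _
    exact Finset.sum_nonneg fun j _ => hterm i j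
  -- the key identity : aᵀMa = -(Q/2)
  have h1 : ∑ i, ∑ j, M i j * a i ^ 2 = 0 := by
    have : ∀ i : Fin m, ∑ j, M i j * a i ^ 2 = 0 := by
      intro i
      rw [← Finset.sum_mul, hrow' i, zero_mul]
    simp [this]
  have h2 : ∑ i, ∑ j, M i j * a j ^ 2 = 0 := by
    rw [Finset.sum_comm]
    have : ∀ j : Fin m, ∑ i, M i j * a j ^ 2 = 0 := by
      intro j
      rw [← Finset.sum_mul]
      have : ∑ i, M i j = 0 := by
        rw [← hrow' j]
        exact Finset.sum_congr rfl fun i _ => (hsym' i j)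
      rw [this, zero_mul]
    simp [this]
  have hdp : dotProduct a (M.mulVec a) = ∑ i, ∑ j, M i j * (a i * a j) := by
    simp only [dotProduct, Matrix.mulVec, Finset.mul_sum]
    exact Finset.sum_congr rfl fun i _ => Finset.sum_congr rfl fun j _ => by ring
  have key : dotProduct a (M.mulVec a) = -(Q/2) := by
    have expand : Q = ∑ i, ∑ j, (M i j * a i ^ 2 - 2 * (M i j * (a i * a j)) + M i j * a j ^ 2) := by
      rw [hQdef]
      apply Finset.sum_congr rfl; intro i _
      apply Finset.sum_congr rfl; intro j _
      ring
    have : Q = ∑ i, ∑ j, M i j * a i ^ 2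
        - 2 * (∑ i, ∑ j, M i j * (a i * a j))
        + ∑ i, ∑ j, M i j * a j ^ 2 := by
      rw [expand]
      simp [Finset.sum_add_distrib, Finset.sum_sub_distrib, Finset.mul_sum]
    rw [h1, h2, ← hdp] at this
    linarith
  -- strictness: Q ≠ 0
  have hQpos : 0 < Q := by
    rcases lt_or_eq_of_le hQnonneg with h | h
    · exact h
    -- Q = 0 : a is constant along edges, hence constant, hence zero; contradiction
    exfalso
    have hzero : ∀ i ∈ (Finset.univ : Finset (Fin m)), ∀ j ∈ (Finset.univ : Finset (Fin m)),
        M i j * (a i - a j)^2 = 0 := by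
      intro i _ j _
      have houter := (Finset.sum_eq_zero_iff_of_nonneg
        (fun i _ => Finset.sum_nonneg fun j _ => hterm i j)).mp h.symm i (Finset.mem_univ i)
      exact (Finset.sum_eq_zero_iff_of_nonneg (fun j _ => hterm i j)).mp houter j (Finset.mem_univ j)
    have hedge : ∀ i j : Fin m, 0 < M i j → a i = a j := by
      intro i j hij
      have := hzero i (Finset.mem_univ i) j (Finset.mem_univ j)
      have hsq : (a i - a j)^2 = 0 := by
        rcases mul_eq_zero.mp this with h' | h'
        · exact absurd h' (ne_of_gt hij)
        · exact h'
      have := pow_eq_zero_iff (n := 2) (by norm_num) |>.mp hsq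
      linarith [sub_eq_zero.mp this]
    have hconst : ∀ u v : Fin m, a u = a v := by
      intro u v
      obtain ⟨p⟩ := hconn u v
      induction p with
      | nil => rfl
      | cons hadj p ih =>
        rename_i x y z
        have hxy : a x = a y := by
          rw [SimpleGraph.fromRel_adj] at hadj
          rcases hadj.2 with h' | h'
          · exact hedge x y h'
          · exact (hedge y x h').symm
        exact hxy.trans ih
    obtain ⟨k, hk⟩ := hsupp
    apply ha
    funext i
    rw [hconst i k, hk]; rfl
  rw [key]
  linarith
end

section
/- Let R ⊆ k[[t₁]] ⊕ ... ⊕ k[[t_m]] be the complete local ring of a reduced curve singularity with m branches, and suppose its genus g(p) = δ(p) − m + 1 equals 0. Then R is isomorphic to the complete local ring of the rational m-fold point, k[[x₁,...,x_m]]/(x_i x_j : 1 ≤ i < j ≤ m), i.e. R consists exactly of all tuples (f₁,...,f_m) with f₁(0) = f₂(0) = ... = f_m(0). -/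
/-- A reduced curve singularity of genus zero with `m` branches is the rational
`m`-fold point: if `R ⊆ k[[t₁]] ⊕ ⋯ ⊕ k[[t_m]]` is the local ring of a reduced
curve singularity (every element of `R` has equal constant terms on all branches)
with `δ = dim_k (R̃/R) = m - 1` (i.e. genus `g = δ - m + 1 = 0`), then `R` consists
exactly of all tuples of power series with equal constant terms. -/
theorem genus_zero_singularity_is_rational_mfold
    {k : Type*} [Field k] [IsAlgClosed k] {m : ℕ} (hm : 0 < m)
    (R : Subalgebra k (Fin m → PowerSeries k))
    (hloc : ∀ f ∈ R, ∀ i j : Fin m,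
      PowerSeries.constantCoeff (f i) = PowerSeries.constantCoeff (f j))
    (hδ : Module.finrank k ((Fin m → PowerSeries k) ⧸ R.toSubmodule) = m - 1)
    (hfin : Module.Finite k ((Fin m → PowerSeries k) ⧸ R.toSubmodule)) :
    (R : Set (Fin m → PowerSeries k)) =
      {f | ∀ i j : Fin m,
        PowerSeries.constantCoeff (f i) = PowerSeries.constantCoeff (f j)} := by
  classical
  set V := Fin m → PowerSeries k with hV
  let π := R.toSubmodule.mkQ
  let jf : Fin (m - 1) → Fin m := fun i => ⟨i + 1, by omega⟩
  have hj0 : ∀ i, jf i ≠ ⟨0, hm⟩ := fun i => by simp [jf, Fin.ext_iff]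
  have hjinj : Function.Injective jf := fun a b h => by
    have : (a : ℕ) + 1 = (b : ℕ) + 1 := congrArg Fin.val h
    exact Fin.ext (by omega)
  let v : Fin (m - 1) → V := fun i => Pi.single (jf i) (1 : PowerSeries k)
  have hcc : ∀ (g : Fin (m - 1) → k) (b : Fin m),
      PowerSeries.constantCoeff ((∑ i, g i • v i) b)
        = ∑ i, if jf i = b then g i else 0 := by
    intro g b
    rw [Finset.sum_apply]
    rw [map_sum]
    refine Finset.sum_congr rfl fun i _ => ?_
    simp only [v]
    rw [Pi.smul_apply, Pi.single_apply]
    by_cases h : jf i = b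
    · simp [h, PowerSeries.smul_eq_C_mul]
    · rw [if_neg (fun hh => h hh.symm), if_neg h, smul_zero, map_zero]
  have hli : LinearIndependent k (fun i => π (v i)) := by
    rw [Fintype.linearIndependent_iff]
    intro g hg i
    have hmem : (∑ i, g i • v i) ∈ R := by
      have h0 : π (∑ i, g i • v i) = 0 := by
        rw [map_sum]; simp only [map_smul]; exact hg
      rw [Submodule.mkQ_apply, Submodule.Quotient.mk_eq_zero] at h0
      exact h0
    have h1 := hloc _ hmem (jf i) ⟨0, hm⟩
    rw [hcc, hcc] at h1
    simpa [hjinj.eq_iff, hj0] using h1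
  haveI : FiniteDimensional k ((Fin m → PowerSeries k) ⧸ R.toSubmodule) := hfin
  have hcard : Fintype.card (Fin (m - 1))
      = Module.finrank k ((Fin m → PowerSeries k) ⧸ R.toSubmodule) := by
    simp [hδ]
  have hspan := hli.span_eq_top_of_card_eq_finrank' hcard
  ext f
  constructor
  · intro hf
    exact hloc f hf
  · intro hf
    obtain ⟨c, hc⟩ : ∃ c : Fin (m - 1) → k, ∑ i, c i • π (v i) = π f := by
      have hmem : π f ∈ Submodule.span k (Set.range fun i => π (v i)) := by
        rw [hspan]; trivial
      exact (Submodule.mem_span_range_iff_exists_fun k).mp hmem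
    have hr : f - ∑ i, c i • v i ∈ R := by
      have h0 : π (f - ∑ i, c i • v i) = 0 := by
        rw [map_sub, map_sum]
        simp only [map_smul]
        rw [hc, sub_self]
      rw [Submodule.mkQ_apply, Submodule.Quotient.mk_eq_zero] at h0
      exact h0
    have hcz : ∀ i, c i = 0 := by
      intro i
      have h1 := hloc _ hr (jf i) ⟨0, hm⟩
      have hsub : ∀ b : Fin m, PowerSeries.constantCoeff ((f - ∑ i, c i • v i) b)
          = PowerSeries.constantCoeff (f b)
            - PowerSeries.constantCoeff ((∑ i, c i • v i) b) := by
        intro b; rw [Pi.sub_apply, map_sub]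
      rw [hsub, hsub, hcc, hcc, hf (jf i) ⟨0, hm⟩] at h1
      have h2 : (∑ i', if jf i' = jf i then c i' else 0)
          = (∑ i', if jf i' = (⟨0, hm⟩ : Fin m) then c i' else 0) := by
        linear_combination -h1
      simpa [hjinj.eq_iff, hj0] using h2
    have : f - ∑ i, c i • v i = f := by
      simp [hcz]
    rw [this] at hr
    exact hr
end

section
/- Let R ⊆ R̃ = k[[t₁]] ⊕ ... ⊕ k[[t_m]] be a reduced complete local curve singularity with maximal ideal m_R = m_{R̃} ∩ R. Define the graded pieces (R̃/R)^i = m_{R̃}^i / ((m_{R̃}^i ∩ R) + m_{R̃}^{i+1}) for i ≥ 0. If (R̃/R)^i = 0 and (R̃/R)^j = 0 for some i,j ≥ 1, then (R̃/R)^{i+j} = 0. -/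
/-- The maximal ideal `m_R̃ = (t₁) ⊕ ⋯ ⊕ (t_m)` of `R̃ = k[[t₁]] ⊕ ⋯ ⊕ k[[t_m]]`,
the kernel of the evaluation (constant term) map to `k^m`. -/
noncomputable def maxIdealTilde (k : Type*) [Field k] (m : ℕ) : Ideal (Fin m → PowerSeries k) :=
  RingHom.ker (Pi.ringHom (fun i =>
    (PowerSeries.constantCoeff : PowerSeries k →+* k).comp (Pi.evalRingHom (fun _ => PowerSeries k) i)))

/-- Multiplicativity of the vanishing of graded pieces: with
`(R̃/R)^i = m_R̃^i / ((m_R̃^i ∩ R) + m_R̃^{i+1})`, if `(R̃/R)^i = 0` and `(R̃/R)^j = 0`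
for some `i, j ≥ 1`, then `(R̃/R)^{i+j} = 0`. Vanishing of `(R̃/R)^n` is expressed as:
every element of `m_R̃^n` is congruent modulo `m_R̃^{n+1}` to an element of `R ∩ m_R̃^n`. -/
theorem graded_piece_vanishing_mul
    {k : Type*} [Field k] {m : ℕ}
    (R : Subalgebra k (Fin m → PowerSeries k))
    (i j : ℕ) (hi1 : 1 ≤ i) (hj1 : 1 ≤ j)
    (hi : ∀ f ∈ (maxIdealTilde k m) ^ i, ∃ r ∈ R,
      r ∈ (maxIdealTilde k m) ^ i ∧ f - r ∈ (maxIdealTilde k m) ^ (i + 1))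
    (hj : ∀ f ∈ (maxIdealTilde k m) ^ j, ∃ r ∈ R,
      r ∈ (maxIdealTilde k m) ^ j ∧ f - r ∈ (maxIdealTilde k m) ^ (j + 1)) :
    ∀ f ∈ (maxIdealTilde k m) ^ (i + j), ∃ r ∈ R,
      r ∈ (maxIdealTilde k m) ^ (i + j) ∧ f - r ∈ (maxIdealTilde k m) ^ (i + j + 1) := by
  intro f hf
  rw [pow_add] at hf
  refine Submodule.mul_induction_on hf ?_ ?_
  · intro a ha b hb
    obtain ⟨r, hrR, hri, har⟩ := hi a ha
    obtain ⟨s, hsR, hsj, hbs⟩ := hj b hb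
    refine ⟨r * s, mul_mem hrR hsR, ?_, ?_⟩
    · rw [pow_add]; exact Submodule.mul_mem_mul hri hsj
    · have h : a * b - r * s = (a - r) * b + r * (b - s) := by ring
      rw [h]
      apply add_mem
      · have h2 := Submodule.mul_mem_mul har hb
        rw [← pow_add] at h2
        rwa [show i + 1 + j = i + j + 1 by omega] at h2
      · have h2 := Submodule.mul_mem_mul hri hbs
        rw [← pow_add] at h2
        rwa [show i + (j + 1) = i + j + 1 by omega] at h2
  · intro x y hx hy
    obtain ⟨r, hrR, hr1, hr2⟩ := hx
    obtain ⟨s, hsR, hs1, hs2⟩ := hy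
    refine ⟨r + s, add_mem hrR hsR, add_mem hr1 hs1, ?_⟩
    have h : x + y - (r + s) = (x - r) + (y - s) := by ring
    rw [h]; exact add_mem hr2 hs2
end

section
/- If R ⊆ R̃ = ⊕ᵢ₌₁^m k[[tᵢ]] is a curve singularity of genus 1 (δ = m), then dim_k (R̃/R)^1 = 1 and (R̃/R)^i = 0 for all i ≥ 2; in particular m_R ⊇ m_{R̃}² and m_R/m_{R̃}² is a codimension-one subspace of m_{R̃}/m_{R̃}². -/
/-- `m_R̃^i` as a `k`-subspace of `R̃`. -/
noncomputable def filt (k : Type*) [Field k] (m : ℕ) (i : ℕ) :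
    Submodule k (Fin m → PowerSeries k) :=
  Submodule.restrictScalars k ((maxIdealTilde k m) ^ i)

/-- `dim_k (R̃/R)^i` where `(R̃/R)^i = m_R̃^i / ((m_R̃^i ∩ R) + m_R̃^{i+1})`. -/
noncomputable def gradedDim {k : Type*} [Field k] {m : ℕ}
    (R : Subalgebra k (Fin m → PowerSeries k)) (i : ℕ) : ℕ :=
  Module.finrank k
    (↥(filt k m i) ⧸ (Submodule.comap (filt k m i).subtype
      ((filt k m i ⊓ R.toSubmodule) ⊔ filt k m (i + 1))))

open PowerSeries

section Aux

variable {k : Type*} [Field k] {m : ℕ}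

lemma mem_maxIdealTilde {f : Fin m → PowerSeries k} :
    f ∈ maxIdealTilde k m ↔ ∀ i, constantCoeff (f i) = 0 := by
  simp [maxIdealTilde, RingHom.mem_ker, funext_iff, Pi.ringHom_apply, RingHom.coe_comp,
    Function.comp_apply, Pi.evalRingHom_apply]
  exact Iff.rfl

lemma maxIdealTilde_eq_span :
    maxIdealTilde k m = Ideal.span {fun _ => (X : PowerSeries k)} := by
  ext f
  rw [mem_maxIdealTilde, Ideal.mem_span_singleton]
  constructor
  · intro h
    choose g hg using fun i => (X_dvd_iff.mpr (h i))
    exact ⟨g, funext hg⟩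
  · rintro ⟨g, rfl⟩ i
    simp

lemma mem_filt {n : ℕ} {f : Fin m → PowerSeries k} :
    f ∈ filt k m n ↔ ∀ i, (X : PowerSeries k) ^ n ∣ f i := by
  rw [filt, Submodule.restrictScalars_mem, maxIdealTilde_eq_span, Ideal.span_singleton_pow,
    Ideal.mem_span_singleton]
  constructor
  · rintro ⟨g, rfl⟩ i
    exact ⟨g i, by simp⟩
  · intro h
    choose g hg using h
    exact ⟨g, funext fun i => by simpa using hg i⟩

lemma filt_mul (a b : ℕ) : filt k m a * filt k m b = filt k m (a + b) := by
  rw [filt, filt, filt, pow_add]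
  rfl

lemma filt_le_filt' {a b : ℕ} (h : a ≤ b) : filt k m b ≤ filt k m a :=
  fun _ hx => Ideal.pow_le_pow_right h hx

noncomputable def cMap (k : Type*) [Field k] (m : ℕ) :
    (Fin m → PowerSeries k) →ₗ[k] (Fin m → k) :=
  LinearMap.pi fun i => (PowerSeries.coeff 0).comp (LinearMap.proj i)

lemma ker_cMap : LinearMap.ker (cMap k m) = filt k m 1 := by
  ext f
  simp [cMap, mem_filt, funext_iff, pow_one, X_dvd_iff, coeff_zero_eq_constantCoeff,
    LinearMap.pi_apply]

lemma sup_filt_eq (hm : 0 < m) (R : Subalgebra k (Fin m → PowerSeries k))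
    (hloc : ∀ f ∈ R, ∀ i j : Fin m,
      PowerSeries.constantCoeff (f i) = PowerSeries.constantCoeff (f j)) :
    filt k m 1 ⊔ R.toSubmodule
      = Submodule.comap (cMap k m) (Submodule.span k {(1 : Fin m → k)}) := by
  apply le_antisymm
  · refine sup_le ?_ ?_
    · intro f hf
      have : cMap k m f = 0 := by rw [← LinearMap.mem_ker, ker_cMap]; exact hf
      simp [Submodule.mem_comap, this]
    · intro f hf
      rw [Submodule.mem_comap, Submodule.mem_span_singleton]
      refine ⟨constantCoeff (f ⟨0, hm⟩), ?_⟩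
      funext i
      simp [cMap, coeff_zero_eq_constantCoeff, hloc f hf i ⟨0, hm⟩]
  · intro f hf
    rw [Submodule.mem_comap, Submodule.mem_span_singleton] at hf
    obtain ⟨c, hc⟩ := hf
    have h1 : f - algebraMap k (Fin m → PowerSeries k) c ∈ filt k m 1 := by
      rw [← ker_cMap, LinearMap.mem_ker, map_sub]
      rw [← hc]
      funext i
      simp [cMap, coeff_zero_eq_constantCoeff, Pi.algebraMap_apply, ← C_eq_algebraMap, constantCoeff_C]
    have h2 : f = (f - algebraMap k (Fin m → PowerSeries k) c)
        + algebraMap k (Fin m → PowerSeries k) c := by ring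
    rw [h2]
    exact Submodule.add_mem_sup h1 (Subalgebra.algebraMap_mem R c)

lemma finrank_quot_comap (hm : 0 < m) :
    Module.finrank k ((Fin m → PowerSeries k) ⧸
      Submodule.comap (cMap k m) (Submodule.span k {(1 : Fin m → k)})) = m - 1 := by
  set D := Submodule.span k {(1 : Fin m → k)} with hD
  have hsurj : Function.Surjective (D.mkQ ∘ₗ cMap k m) := by
    apply Function.Surjective.comp (Submodule.mkQ_surjective D)
    intro c
    exact ⟨fun i => PowerSeries.C (c i), by funext i; simp [cMap, coeff_zero_eq_constantCoeff]⟩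
  have hker : LinearMap.ker (D.mkQ ∘ₗ cMap k m) = Submodule.comap (cMap k m) D := by
    rw [LinearMap.ker_comp, Submodule.ker_mkQ]
  have h1 : Module.finrank k ((Fin m → PowerSeries k) ⧸ Submodule.comap (cMap k m) D)
      = Module.finrank k ((Fin m → k) ⧸ D) := by
    rw [← hker]
    exact (LinearMap.quotKerEquivOfSurjective _ hsurj).finrank_eq
  have hdim : Module.finrank k D = 1 := by
    rw [hD]
    exact finrank_span_singleton (fun h => one_ne_zero (congrFun h ⟨0, hm⟩))
  have htot : Module.finrank k (Fin m → k) = m := by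
    simp [Module.finrank_pi]
  have := Submodule.finrank_quotient_add_finrank D
  rw [hdim, htot] at this
  omega

lemma finrank_map_filt_one (hm : 0 < m) (R : Subalgebra k (Fin m → PowerSeries k))
    (hloc : ∀ f ∈ R, ∀ i j : Fin m,
      PowerSeries.constantCoeff (f i) = PowerSeries.constantCoeff (f j))
    (hfin : Module.Finite k ((Fin m → PowerSeries k) ⧸ R.toSubmodule))
    (hδ : Module.finrank k ((Fin m → PowerSeries k) ⧸ R.toSubmodule) = m) :
    Module.finrank k (Submodule.map R.toSubmodule.mkQ (filt k m 1)) = 1 := by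
  haveI := hfin
  set W := Submodule.map R.toSubmodule.mkQ (filt k m 1) with hW
  have e := Submodule.quotientQuotientEquivQuotientSup R.toSubmodule (filt k m 1)
  have h1 : Module.finrank k ((((Fin m → PowerSeries k) ⧸ R.toSubmodule)) ⧸ W)
      = m - 1 := by
    rw [e.finrank_eq, sup_comm, sup_filt_eq hm R hloc]
    exact finrank_quot_comap hm
  have := Submodule.finrank_quotient_add_finrank W
  rw [h1, hδ] at this
  omega

lemma chain (R : Subalgebra k (Fin m → PowerSeries k))
    (hB : filt k m 1 ≤ R.toSubmodule ⊔ filt k m 2) :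
    ∀ n, 1 ≤ n → filt k m n ≤ (R.toSubmodule ⊓ filt k m n) ⊔ filt k m (n + 1) := by
  have base : filt k m 1 ≤ (R.toSubmodule ⊓ filt k m 1) ⊔ filt k m 2 := by
    intro x hx
    obtain ⟨r, hr, q, hq, hrq⟩ := Submodule.mem_sup.mp (hB hx)
    have hr1 : r ∈ filt k m 1 := by
      have : r = x - q := by rw [← hrq]; ring
      rw [this]
      exact sub_mem hx (filt_le_filt' one_le_two hq)
    exact Submodule.mem_sup.mpr ⟨r, ⟨hr, hr1⟩, q, hq, hrq⟩
  intro n hn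
  induction n, hn using Nat.le_induction with
  | base => exact base
  | succ n hn ih =>
    have h1 : filt k m (n + 1) = filt k m 1 * filt k m n := by
      rw [filt_mul, Nat.add_comm]
    refine le_trans (le_of_eq h1) (Submodule.mul_le.mpr ?_)
    intro x hx y hy
    obtain ⟨r, hr, q, hq, hrq⟩ := Submodule.mem_sup.mp (base hx)
    obtain ⟨s, hs, z, hz, hsz⟩ := Submodule.mem_sup.mp (ih hy)
    have hxy : x * y = r * s + (r * z + (q * s + q * z)) := by
      rw [← hrq, ← hsz]; ring
    rw [hxy]
    have t1 : r * s ∈ (R.toSubmodule ⊓ filt k m (n + 1)) ⊔ filt k m (n + 2) := by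
      refine Submodule.mem_sup_left ⟨?_, ?_⟩
      · exact R.mul_mem hr.1 hs.1
      · rw [show filt k m (n+1) = filt k m 1 * filt k m n from h1]
        exact Submodule.mul_mem_mul hr.2 hs.2
    have t2 : r * z ∈ (R.toSubmodule ⊓ filt k m (n + 1)) ⊔ filt k m (n + 2) := by
      refine Submodule.mem_sup_right ?_
      have : r * z ∈ filt k m 1 * filt k m (n + 1) := Submodule.mul_mem_mul hr.2 hz
      rw [filt_mul, Nat.add_comm] at this
      exact this
    have t3 : q * s ∈ (R.toSubmodule ⊓ filt k m (n + 1)) ⊔ filt k m (n + 2) := by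
      refine Submodule.mem_sup_right ?_
      have : q * s ∈ filt k m 2 * filt k m n := Submodule.mul_mem_mul hq hs.2
      rw [filt_mul] at this
      have h22 : 2 + n = n + 2 := by omega
      rw [h22] at this
      exact this
    have t4 : q * z ∈ (R.toSubmodule ⊓ filt k m (n + 1)) ⊔ filt k m (n + 2) := by
      refine Submodule.mem_sup_right ?_
      have : q * z ∈ filt k m 2 * filt k m (n + 1) := Submodule.mul_mem_mul hq hz
      rw [filt_mul] at this
      exact filt_le_filt' (by omega) this
    exact add_mem t1 (add_mem t2 (add_mem t3 t4))

lemma chain2 (R : Subalgebra k (Fin m → PowerSeries k))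
    (hB : filt k m 1 ≤ R.toSubmodule ⊔ filt k m 2) :
    ∀ n, 1 ≤ n → filt k m 1 ≤ R.toSubmodule ⊔ filt k m n := by
  intro n hn
  induction n, hn using Nat.le_induction with
  | base => exact le_sup_right
  | succ n hn ih =>
    refine le_trans ih (sup_le le_sup_left (le_trans (chain R hB n hn) ?_))
    exact sup_le (le_trans inf_le_left le_sup_left) le_sup_right

lemma filt_conductor (R : Subalgebra k (Fin m → PowerSeries k))
    (hfin : Module.Finite k ((Fin m → PowerSeries k) ⧸ R.toSubmodule))
    (hB : filt k m 1 ≤ R.toSubmodule ⊔ filt k m 2) :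
    ∃ N, filt k m N ≤ R.toSubmodule := by
  classical
  haveI := hfin
  -- extract a ∈ R with components of order exactly one
  have hX : (fun _ => (X : PowerSeries k)) ∈ filt k m 1 :=
    mem_filt.mpr fun i => by simp
  obtain ⟨a, haR, q, hq, haq⟩ := Submodule.mem_sup.mp (hB hX)
  rw [mem_filt] at hq
  have ha : ∀ i, a i = X - q i := fun i => by
    have := congrFun haq i; simp at this; linear_combination this
  have hq0 : ∀ i, constantCoeff (q i) = 0 := fun i => by
    have := (X_pow_dvd_iff.mp (hq i)) 0 (by norm_num)
    simpa [coeff_zero_eq_constantCoeff] using this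
  have hq1 : ∀ i, coeff 1 (q i) = 0 := fun i =>
    (X_pow_dvd_iff.mp (hq i)) 1 (by norm_num)
  have ha0 : ∀ i, constantCoeff (a i) = 0 := fun i => by
    rw [ha i]; simp [hq0 i]
  have ha1 : ∀ i, coeff 1 (a i) = 1 := fun i => by
    rw [ha i]; simp [hq1 i]
  -- w with a = Xvec * w, w i unit
  have hdvd : ∀ i, (X : PowerSeries k) ∣ a i := fun i => X_dvd_iff.mpr (ha0 i)
  choose w hw using hdvd
  have hw1 : ∀ i, constantCoeff (w i) = 1 := fun i => by
    have : coeff 1 (a i) = constantCoeff (w i) := by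
      rw [hw i, coeff_succ_X_mul 0, coeff_zero_eq_constantCoeff]
    rw [← this, ha1 i]
  have haw : a = (fun _ => (X : PowerSeries k)) * w := funext fun i => hw i
  -- the multiplication-by-a endomorphism of the quotient
  set Rs := R.toSubmodule with hRs
  have hRa : Rs ≤ Submodule.comap ((Algebra.lmul k (Fin m → PowerSeries k)) a) Rs := by
    intro x hx
    exact R.mul_mem haR hx
  set T := Submodule.mapQ Rs Rs _ hRa with hT
  have hTmk : ∀ x, T (Rs.mkQ x) = Rs.mkQ (a * x) := fun x => by
    rfl
  have hTn : ∀ (n : ℕ) (x : Fin m → PowerSeries k),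
      (T ^ n) (Rs.mkQ x) = Rs.mkQ (a ^ n * x) := by
    intro n
    induction n with
    | zero => intro x; simp
    | succ n ih =>
      intro x
      rw [pow_succ', Module.End.mul_apply, ih, hTmk, ← mul_assoc, ← pow_succ']
  have hcomm : ∀ (P : Polynomial k) (x : Fin m → PowerSeries k),
      Polynomial.aeval T P (Rs.mkQ x) = Rs.mkQ ((Polynomial.aeval a P) * x) := by
    intro P
    induction P using Polynomial.induction_on' with
    | add p q hp hq =>
      intro x
      simp only [map_add, LinearMap.add_apply, hp, hq, add_mul]
    | monomial n c =>
      intro x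
      simp only [Polynomial.aeval_monomial, Module.End.mul_apply,
        Module.algebraMap_end_apply, hTn]
      rw [← map_smul]
      congr 1
      rw [Algebra.smul_def, mul_assoc]
  set p := LinearMap.charpoly T with hp
  have hpm : p.Monic := LinearMap.charpoly_monic T
  have hpz : Polynomial.aeval T p = 0 := LinearMap.aeval_self_charpoly T
  set b := Polynomial.aeval a p with hb
  have hbR : ∀ x, b * x ∈ Rs := by
    intro x
    have h := hcomm p x
    rw [hpz] at h
    simp only [LinearMap.zero_apply] at h
    exact (Submodule.Quotient.mk_eq_zero _).mp h.symm
  have hpne : p ≠ 0 := hpm.ne_zero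
  set e := p.natTrailingDegree with he
  obtain ⟨P1, hP1⟩ : (Polynomial.X : Polynomial k) ^ e ∣ p :=
    Polynomial.X_pow_dvd_iff.mpr fun d hd => Polynomial.coeff_eq_zero_of_lt_natTrailingDegree hd
  have hP10 : P1.coeff 0 ≠ 0 := by
    intro hc
    have h0 := Polynomial.coeff_natTrailingDegree_ne_zero.mpr hpne
    apply h0
    rw [← he, hP1]
    have hcx := Polynomial.coeff_X_pow_mul P1 e 0
    rw [Nat.zero_add] at hcx
    rw [hcx, hc]
  set u := Polynomial.aeval a P1 with hu
  have hui : ∀ i, IsUnit (u i) := by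
    intro i
    rw [isUnit_iff_constantCoeff]
    have hui' : u i = Polynomial.aeval (a i) P1 := by
      rw [hu]
      exact (Polynomial.aeval_algHom_apply (Pi.evalAlgHom k (fun _ => PowerSeries k) i) a P1).symm
    have hcc : constantCoeff (u i) = P1.coeff 0 := by
      rw [hui', Polynomial.aeval_eq_sum_range, map_sum, Finset.sum_eq_single 0]
      · simp
      · intro j hj hj0
        rw [Algebra.smul_def, map_mul, map_pow, ha0 i, zero_pow hj0, mul_zero]
      · intro h
        exact absurd (Finset.mem_range.mpr (Nat.succ_pos _)) h
    rw [hcc]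
    exact (isUnit_iff_ne_zero).mpr hP10
  have hwi : ∀ i, IsUnit ((w ^ e * u) i) := by
    intro i
    have h1 : (w ^ e * u) i = (w i) ^ e * u i := rfl
    rw [h1]
    refine IsUnit.mul (IsUnit.pow e ?_) (hui i)
    rw [isUnit_iff_constantCoeff, hw1 i]
    exact isUnit_one
  choose v hv using fun i => (hwi i).exists_right_inv
  have hvv : (w ^ e * u) * (fun i => v i) = 1 := funext fun i => hv i
  refine ⟨e, ?_⟩
  intro f hf
  rw [mem_filt] at hf
  choose y hy using hf
  have hbfact : b = (fun _ => (X : PowerSeries k)) ^ e * (w ^ e * u) := by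
    rw [hb, hP1, map_mul, map_pow, Polynomial.aeval_X, ← hu, haw, mul_pow]
    ring
  have hffact : f = (fun _ => (X : PowerSeries k)) ^ e * y := funext fun i => by
    simpa using hy i
  have hfb : f = b * ((fun i => v i) * y) := by
    rw [hbfact, hffact]
    calc (fun _ => (X:PowerSeries k))^e * y
        = (fun _ => (X:PowerSeries k))^e * ((w^e*u) * (fun i => v i)) * y := by
          rw [hvv, mul_one]
      _ = (fun _ => (X:PowerSeries k))^e * (w^e*u) * ((fun i => v i) * y) := by ring
  rw [hfb]
  exact hbR _

lemma caseB_false (hm : 0 < m) (R : Subalgebra k (Fin m → PowerSeries k))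
    (hloc : ∀ f ∈ R, ∀ i j : Fin m,
      PowerSeries.constantCoeff (f i) = PowerSeries.constantCoeff (f j))
    (hfin : Module.Finite k ((Fin m → PowerSeries k) ⧸ R.toSubmodule))
    (hδ : Module.finrank k ((Fin m → PowerSeries k) ⧸ R.toSubmodule) = m)
    (hB : filt k m 1 ≤ R.toSubmodule ⊔ filt k m 2) : False := by
  obtain ⟨N, hN⟩ := filt_conductor R hfin hB
  have h1 : filt k m 1 ≤ R.toSubmodule := by
    refine le_trans (chain2 R hB (N + 1) (Nat.le_add_left 1 N)) (sup_le le_rfl ?_)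
    exact le_trans (filt_le_filt' (Nat.le_succ N)) hN
  have heq : filt k m 1 ⊔ R.toSubmodule = R.toSubmodule := sup_eq_right.mpr h1
  have hc := sup_filt_eq hm R hloc
  rw [heq] at hc
  have hfr := finrank_quot_comap (k := k) hm
  rw [← hc, hδ] at hfr
  omega

lemma filt_two_le (hm : 0 < m) (R : Subalgebra k (Fin m → PowerSeries k))
    (hloc : ∀ f ∈ R, ∀ i j : Fin m,
      PowerSeries.constantCoeff (f i) = PowerSeries.constantCoeff (f j))
    (hfin : Module.Finite k ((Fin m → PowerSeries k) ⧸ R.toSubmodule))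
    (hδ : Module.finrank k ((Fin m → PowerSeries k) ⧸ R.toSubmodule) = m) :
    filt k m 2 ≤ R.toSubmodule := by
  by_cases hB : filt k m 1 ≤ R.toSubmodule ⊔ filt k m 2
  · exact absurd hB (fun h => caseB_false hm R hloc hfin hδ h)
  · haveI := hfin
    set W2 := Submodule.map R.toSubmodule.mkQ (filt k m 2) with hW2
    set W := Submodule.map R.toSubmodule.mkQ (filt k m 1) with hW
    have hle : W2 ≤ W := Submodule.map_mono (filt_le_filt' one_le_two)
    have hne : W2 ≠ W := by
      intro h
      apply hB
      intro x hx
      have hx' : R.toSubmodule.mkQ x ∈ W2 := h ▸ ⟨x, hx, rfl⟩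
      obtain ⟨y, hy, hxy⟩ := hx'
      have hsub : x - y ∈ R.toSubmodule := by
        rw [← Submodule.Quotient.mk_eq_zero]
        have : R.toSubmodule.mkQ (x - y) = 0 := by
          rw [map_sub, hxy, sub_self]
        exact this
      exact Submodule.mem_sup.mpr ⟨x - y, hsub, y, hy, by ring⟩
    haveI : FiniteDimensional k ((Fin m → PowerSeries k) ⧸ R.toSubmodule) := hfin
    haveI : Module.Finite k W := FiniteDimensional.finiteDimensional_submodule W
    haveI : Module.Finite k W2 := FiniteDimensional.finiteDimensional_submodule W2
    have hlt : Module.finrank k W2 < Module.finrank k W :=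
      Submodule.finrank_lt_finrank_of_lt (lt_of_le_of_ne hle hne)
    rw [finrank_map_filt_one hm R hloc hfin hδ] at hlt
    have h0 : Module.finrank k W2 = 0 := by omega
    have hbot : W2 = ⊥ := Submodule.finrank_eq_zero.mp h0
    intro x hx
    have hx' : R.toSubmodule.mkQ x ∈ W2 := ⟨x, hx, rfl⟩
    rw [hbot, Submodule.mem_bot] at hx'
    exact (Submodule.Quotient.mk_eq_zero _).mp hx'

end Aux

/-- For a curve singularity `R ⊆ R̃ = ⊕ᵢ₌₁^m k[[tᵢ]]` of genus one (δ = m):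
`dim_k (R̃/R)^1 = 1`, `(R̃/R)^i = 0` for all `i ≥ 2`, and `m_R̃² ⊆ R` (so that
`m_R/m_R̃²` is a codimension-one subspace of `m_R̃/m_R̃²`). -/
theorem genus_one_filtration
    {k : Type*} [Field k] [IsAlgClosed k] {m : ℕ} (hm : 0 < m)
    (R : Subalgebra k (Fin m → PowerSeries k))
    (hloc : ∀ f ∈ R, ∀ i j : Fin m,
      (PowerSeries.constantCoeff : PowerSeries k →+* k) (f i) = (PowerSeries.constantCoeff : PowerSeries k →+* k) (f j))
    (hfin : Module.Finite k ((Fin m → PowerSeries k) ⧸ R.toSubmodule))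
    (hδ : Module.finrank k ((Fin m → PowerSeries k) ⧸ R.toSubmodule) = m) :
    gradedDim R 1 = 1 ∧ (∀ i : ℕ, 2 ≤ i → gradedDim R i = 0) ∧
      filt k m 2 ≤ R.toSubmodule := by
  have h2 : filt k m 2 ≤ R.toSubmodule := filt_two_le hm R hloc hfin hδ
  refine ⟨?_, ?_, h2⟩
  · haveI := hfin
    have hsup : (filt k m 1 ⊓ R.toSubmodule) ⊔ filt k m (1 + 1) = filt k m 1 ⊓ R.toSubmodule :=
      sup_eq_left.mpr (le_inf (filt_le_filt' one_le_two) h2)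
    unfold gradedDim
    rw [hsup]
    have hker : LinearMap.ker (R.toSubmodule.mkQ ∘ₗ (filt k m 1).subtype)
        = Submodule.comap (filt k m 1).subtype (filt k m 1 ⊓ R.toSubmodule) := by
      rw [LinearMap.ker_comp, Submodule.ker_mkQ]
      ext x
      simp [Submodule.mem_comap, x.2]
    have hrange : LinearMap.range (R.toSubmodule.mkQ ∘ₗ (filt k m 1).subtype)
        = Submodule.map R.toSubmodule.mkQ (filt k m 1) := by
      rw [LinearMap.range_comp, Submodule.range_subtype]
    have e := LinearMap.quotKerEquivRange (R.toSubmodule.mkQ ∘ₗ (filt k m 1).subtype)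
    rw [hker, hrange] at e
    rw [e.finrank_eq]
    exact finrank_map_filt_one hm R hloc hfin hδ
  · intro i hi
    have h1 : filt k m i ≤ R.toSubmodule := le_trans (filt_le_filt' hi) h2
    have htop : Submodule.comap (filt k m i).subtype
        ((filt k m i ⊓ R.toSubmodule) ⊔ filt k m (i + 1)) = ⊤ := by
      rw [inf_eq_left.mpr h1, sup_eq_left.mpr (filt_le_filt' (Nat.le_succ i))]
      exact Submodule.comap_subtype_self _
    unfold gradedDim
    rw [htop]
    haveI : Subsingleton (↥(filt k m i) ⧸ (⊤ : Submodule k ↥(filt k m i))) :=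
      Submodule.Quotient.subsingleton_iff.mpr rfl
    exact Module.finrank_zero_of_subsingleton
end
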